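/- Let {X_n} be a sequence of compact length spaces converging in the Gromov–Hausdorff sense to a compact length space X homeomorphic to a 2-manifold, and suppose limsup_{n→∞} H²(X_n) < ∞. Then for each δ > 0 and for any sequence of pairs of disjoint continua E_n, F_n ⊂ X_n with min{diam(E_n), diam(F_n)} ≥ δ for all n, one has limsup_{n→∞} Mod Γ*(E_n, F_n; X_n) < ∞. -/

import Mathlib

open Metric MeasureTheory Filter Set
open scoped ENNReal NNReal Topology

/-!
STATEMENT 8: Uniform upper bound on the modulus of separating curve families along a
Gromov–Hausdorff convergent sequence of compact length spaces whose limit is a compact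
length surface, under a uniform area bound.

The 2-modulus of a curve family is defined with respect to the Hausdorff 2-measure
(normalized so as to coincide with Lebesgue measure on the plane); line integrals are taken
with respect to arc length, via the unit-speed (natural) reparametrization of a rectifiable
curve.  `Γ*(E,F;Z)` is the family of rectifiable curves in `Z \ (E ∪ F)` whose trace
separates `E` from `F`.
-/

/-- A curve in a metric space: a continuous map on a compact interval. -/
structure Curve (X : Type*) [MetricSpace X] where
  a : ℝ
  b : ℝ
  hab : a ≤ b
  toFun : ℝ → X
  cont : ContinuousOn toFun (Set.Icc a b)

namespace Curve
variable {X Y : Type*} [MetricSpace X] [MetricSpace Y]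

/-- The length of a curve: the total variation of its parametrization. -/
noncomputable def length (γ : Curve X) : ℝ≥0∞ := eVariationOn γ.toFun (Set.Icc γ.a γ.b)

/-- The trace (image) of a curve. -/
def trace (γ : Curve X) : Set X := γ.toFun '' Set.Icc γ.a γ.b

/-- The integral of `ρ` along a (rectifiable) curve with respect to arc length, computed
via the unit-speed (natural) reparametrization of the curve. -/
noncomputable def lineIntegral (γ : Curve X) (ρ : X → ℝ≥0∞) : ℝ≥0∞ :=
  ∫⁻ s in Set.Icc (0 : ℝ) γ.length.toReal,
    ρ (naturalParameterization γ.toFun (Set.Icc γ.a γ.b) γ.a s)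

end Curve

/-- The Hausdorff 2-measure, normalized so as to coincide with Lebesgue measure on `ℝ²`. -/
noncomputable def hausdorff2 (X : Type*) [MetricSpace X] [MeasurableSpace X] [BorelSpace X] :
    Measure X := (ENNReal.ofReal (Real.pi / 4)) • MeasureTheory.Measure.hausdorffMeasure 2

/-- `ρ` is admissible for the curve family `Γ` if it is Borel and `∫_γ ρ ds ≥ 1` for
every rectifiable curve `γ ∈ Γ`. -/
def Admissible {X : Type*} [MetricSpace X] [MeasurableSpace X] [BorelSpace X]
    (ρ : X → ℝ≥0∞) (Γ : Set (Curve X)) : Prop :=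
  Measurable ρ ∧ ∀ γ ∈ Γ, γ.length ≠ ⊤ → 1 ≤ γ.lineIntegral ρ

/-- The 2-modulus of a curve family, with respect to the Hausdorff 2-measure. -/
noncomputable def modulus {X : Type*} [MetricSpace X] [MeasurableSpace X] [BorelSpace X]
    (Γ : Set (Curve X)) : ℝ≥0∞ :=
  ⨅ (ρ : X → ℝ≥0∞) (_ : Admissible ρ Γ), ∫⁻ x, (ρ x) ^ 2 ∂(hausdorff2 X)

/-- A length space: the distance between any two points is the infimum of the lengths
of curves joining them. -/
def IsLengthSpace (X : Type*) [MetricSpace X] : Prop :=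
  ∀ x y : X, edist x y =
    ⨅ γ : {γ : Curve X // γ.toFun γ.a = x ∧ γ.toFun γ.b = y}, γ.1.length

/-- `Γ*(E,F;Z)`: the family of rectifiable curves in `Z \ (E ∪ F)` whose trace separates
`E` from `F`, i.e. no point of `E` lies in the same connected component of the complement
of the trace as a point of `F`. -/
def separatingCurves {Z : Type*} [MetricSpace Z] (E F : Set Z) : Set (Curve Z) :=
  {γ | γ.length ≠ ⊤ ∧ γ.trace ∩ (E ∪ F) = ∅ ∧
    ∀ x ∈ E, ∀ y ∈ F, y ∉ connectedComponentIn γ.traceᶜ x}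

-- ===================== AUX =====================

section Aux
variable {Z : Type*} [MetricSpace Z]

lemma Curve.start_mem_trace (γ : Curve Z) : γ.toFun γ.a ∈ γ.trace :=
  ⟨γ.a, ⟨le_rfl, γ.hab⟩, rfl⟩

lemma Curve.end_mem_trace (γ : Curve Z) : γ.toFun γ.b ∈ γ.trace :=
  ⟨γ.b, ⟨γ.hab, le_rfl⟩, rfl⟩

lemma Curve.trace_preconnected (γ : Curve Z) : IsPreconnected γ.trace :=
  isPreconnected_Icc.image _ γ.cont

lemma Curve.edist_le_length (γ : Curve Z) {s t : ℝ} (hs : s ∈ Set.Icc γ.a γ.b)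
    (ht : t ∈ Set.Icc γ.a γ.b) : edist (γ.toFun s) (γ.toFun t) ≤ γ.length :=
  eVariationOn.edist_le _ hs ht

lemma IsLengthSpace.exists_curve {Z : Type*} [MetricSpace Z] (h : IsLengthSpace Z) (x y : Z) :
    Nonempty {γ : Curve Z // γ.toFun γ.a = x ∧ γ.toFun γ.b = y} := by
  by_contra hne
  have h0 := h x y
  rw [not_nonempty_iff] at hne
  rw [iInf_of_empty] at h0
  exact (edist_ne_top x y) h0

lemma real_le_of_forall_pos {a b : ℝ} (h : ∀ ε : ℝ, 0 < ε → a ≤ b + ε) : a ≤ b := by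
  by_contra h'
  push_neg at h'
  have := h ((a - b)/2) (by linarith)
  linarith

/-- Key metric inequality: if `v` is not in the connected component of `u` in `Tᶜ` in a
length space, then `d(u,T) + d(v,T) ≤ d(u,v)`. -/
lemma key_separation {Z : Type*} [MetricSpace Z] (hlen : IsLengthSpace Z)
    {T : Set Z} (hT : T.Nonempty) {u v : Z} (hu : u ∈ Tᶜ)
    (hv : v ∉ connectedComponentIn Tᶜ u) :
    Metric.infDist u T + Metric.infDist v T ≤ dist u v := by
  have H : EMetric.infEdist u T + EMetric.infEdist v T ≤ edist u v := by
    rw [hlen u v]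
    refine le_iInf fun γs => ?_
    obtain ⟨γ, ha, hb⟩ := γs
    show _ ≤ γ.length
    have hex : ∃ c ∈ Set.Icc γ.a γ.b, γ.toFun c ∈ T := by
      by_contra hc
      push_neg at hc
      have hsub : γ.trace ⊆ Tᶜ := by
        rintro _ ⟨c, hcI, rfl⟩; exact hc c hcI
      have h1 : γ.trace ⊆ connectedComponentIn Tᶜ u :=
        γ.trace_preconnected.subset_connectedComponentIn
          (by rw [← ha]; exact γ.start_mem_trace) hsub
      exact hv (h1 (by rw [← hb]; exact γ.end_mem_trace))
    obtain ⟨c, hcI, hcT⟩ := hex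
    have h1 : EMetric.infEdist u T ≤ eVariationOn γ.toFun (Set.Icc γ.a γ.b ∩ Set.Icc γ.a c) := by
      refine le_trans (EMetric.infEdist_le_edist_of_mem hcT) ?_
      rw [← ha]
      exact eVariationOn.edist_le _ ⟨⟨le_rfl, γ.hab⟩, le_rfl, hcI.1⟩ ⟨hcI, hcI.1, le_rfl⟩
    have h2 : EMetric.infEdist v T ≤ eVariationOn γ.toFun (Set.Icc γ.a γ.b ∩ Set.Icc c γ.b) := by
      refine le_trans (EMetric.infEdist_le_edist_of_mem hcT) ?_
      rw [← hb, edist_comm]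
      exact eVariationOn.edist_le _ ⟨hcI, le_rfl, hcI.2⟩ ⟨⟨γ.hab, le_rfl⟩, hcI.2, le_rfl⟩
    calc EMetric.infEdist u T + EMetric.infEdist v T
        ≤ eVariationOn γ.toFun (Set.Icc γ.a γ.b ∩ Set.Icc γ.a c) +
          eVariationOn γ.toFun (Set.Icc γ.a γ.b ∩ Set.Icc c γ.b) := add_le_add h1 h2
      _ = eVariationOn γ.toFun (Set.Icc γ.a γ.b ∩ Set.Icc γ.a γ.b) :=
          eVariationOn.Icc_add_Icc _ hcI.1 hcI.2 hcI
      _ = γ.length := by rw [Set.inter_self]; rfl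
  have hut : EMetric.infEdist u T ≠ ⊤ := Metric.infEdist_ne_top hT
  have hvt : EMetric.infEdist v T ≠ ⊤ := Metric.infEdist_ne_top hT
  have := ENNReal.toReal_mono (edist_ne_top u v) H
  rw [ENNReal.toReal_add hut hvt] at this
  simp only [Metric.infDist, edist_dist, ENNReal.toReal_ofReal dist_nonneg] at this ⊢
  exact this

/-- Constant test function: modulus bound from a uniform lower bound on lengths. -/
lemma modulus_le_of_length_lower_bound {Z : Type*} [MetricSpace Z] [MeasurableSpace Z]
    [BorelSpace Z] {Γ : Set (Curve Z)} {m : ℝ} (hm : 0 < m)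
    (h : ∀ γ ∈ Γ, ENNReal.ofReal m ≤ γ.length) :
    modulus Γ ≤ (ENNReal.ofReal (1/m))^2 * hausdorff2 Z Set.univ := by
  have hadm : Admissible (fun _ => ENNReal.ofReal (1/m)) Γ := by
    refine ⟨measurable_const, fun γ hγ hfin => ?_⟩
    have hLI : γ.lineIntegral (fun _ => ENNReal.ofReal (1/m))
        = ENNReal.ofReal (1/m) * γ.length := by
      rw [Curve.lineIntegral, MeasureTheory.setLIntegral_const, Real.volume_Icc, sub_zero,
        ENNReal.ofReal_toReal hfin]
    rw [hLI]
    calc (1:ℝ≥0∞) = ENNReal.ofReal (1/m) * ENNReal.ofReal m := by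
          rw [← ENNReal.ofReal_mul (by positivity), one_div, inv_mul_cancel₀ hm.ne',
            ENNReal.ofReal_one]
      _ ≤ _ := mul_le_mul_right (h γ hγ) _
  calc modulus Γ ≤ ∫⁻ _, (ENNReal.ofReal (1/m))^2 ∂(hausdorff2 Z) :=
        iInf_le_of_le _ (iInf_le_of_le hadm le_rfl)
    _ = _ := lintegral_const _

end Aux

section Punctured

variable {V : Type*} [NormedAddCommGroup V] [NormedSpace ℝ V]

/-- A convex set containing three "affinely independent" points, minus a point, is
path-connected (hence preconnected). -/
lemma isPreconnected_convex_diff_singleton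
    {C : Set V} (hC : Convex ℝ C) {w₁ w₂ w₃ : V}
    (h1 : w₁ ∈ C) (h2 : w₂ ∈ C) (h3 : w₃ ∈ C)
    (hind : ∀ a b : ℝ, a • (w₂ - w₁) = b • (w₃ - w₁) → a = 0 ∧ b = 0)
    (x : V) : IsPreconnected (C \ {x}) := by
  -- first, some consequences of hind
  have hw21 : w₂ - w₁ ≠ 0 := by
    intro h
    have := (hind 1 0 (by rw [h]; simp)).1
    norm_num at this
  -- joining within a segment
  have segJoin : ∀ y z : V, y ∈ C \ {x} → z ∈ C \ {x} → segment ℝ y z ⊆ C \ {x} →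
      JoinedIn (C \ {x}) y z := by
    intro y z hy _ hseg
    exact JoinedIn.mono
      (((convex_segment y z).isPathConnected ⟨y, left_mem_segment ℝ y z⟩).joinedIn
        y (left_mem_segment ℝ y z) z (right_mem_segment ℝ y z)) hseg
  have main : ∀ y ∈ C \ {x}, ∀ z ∈ C \ {x}, JoinedIn (C \ {x}) y z := by
    intro y hy z hz
    by_cases hxseg : x ∈ segment ℝ y z
    swap
    · refine segJoin y z hy hz ?_
      intro p hp
      exact ⟨hC.segment_subset hy.1 hz.1 hp, by rintro rfl; exact hxseg hp⟩
    · -- x on the segment [y,z]; route through a third point off the line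
      have hyz : y ≠ z := by
        rintro rfl
        rw [segment_same] at hxseg
        exact hy.2 (by simpa using hxseg.symm)
      set d := z - y with hd
      have hdne : d ≠ 0 := sub_ne_zero.mpr (Ne.symm hyz)
      set L : Set V := {p | ∃ t : ℝ, p = y + t • d} with hL
      have hxL : x ∈ L := by
        rw [segment_eq_image'] at hxseg
        obtain ⟨t, _, ht⟩ := hxseg
        exact ⟨t, ht.symm⟩
      -- find w ∈ C, w ∉ L
      have hwex : ∃ w ∈ C, w ∉ L := by
        by_contra hcon
        push_neg at hcon
        obtain ⟨t₁, ht₁⟩ := hcon w₁ h1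
        obtain ⟨t₂, ht₂⟩ := hcon w₂ h2
        obtain ⟨t₃, ht₃⟩ := hcon w₃ h3
        have e2 : w₂ - w₁ = (t₂ - t₁) • d := by rw [ht₁, ht₂, sub_smul]; abel
        have e3 : w₃ - w₁ = (t₃ - t₁) • d := by rw [ht₁, ht₃, sub_smul]; abel
        have : (t₃ - t₁) • (w₂ - w₁) = (t₂ - t₁) • (w₃ - w₁) := by
          rw [e2, e3, smul_smul, smul_smul, mul_comm]
        obtain ⟨hA, hB⟩ := hind _ _ this
        have ht2 : t₂ - t₁ = 0 := hB
        rw [ht2, zero_smul] at e2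
        exact hw21 e2
      obtain ⟨w, hwC, hwL⟩ := hwex
      have hwx : w ≠ x := by rintro rfl; exact hwL hxL
      obtain ⟨s, hs⟩ := hxL
      -- x ∉ [y, w]
      have hseg1 : x ∉ segment ℝ y w := by
        intro hmem
        rw [segment_eq_image'] at hmem
        obtain ⟨t, htI, ht⟩ := hmem
        change y + t • (w - y) = x at ht
        rcases eq_or_ne t 0 with rfl | htne
        · rw [zero_smul, add_zero] at ht
          exact hy.2 ht
        · -- w = y + (t⁻¹ * s) • d ∈ L
          apply hwL
          refine ⟨t⁻¹ * s, ?_⟩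
          have : t • (w - y) = s • d := by
            have : y + t • (w - y) = y + s • d := by rw [← hs, ← ht]
            have h' := add_left_cancel this
            exact h'
          have hw' : w - y = (t⁻¹ * s) • d := by
            rw [mul_smul, ← this, inv_smul_smul₀ htne]
          rw [← hw']; abel
      -- x ∉ [w, z]
      have hseg2 : x ∉ segment ℝ w z := by
        intro hmem
        rw [segment_eq_image'] at hmem
        obtain ⟨t, htI, ht⟩ := hmem
        change w + t • (z - w) = x at ht
        rcases eq_or_ne t 1 with rfl | htne
        · rw [one_smul] at ht
          exact hz.2 (Set.mem_singleton_iff.mpr (by rw [← ht]; abel))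
        · apply hwL
          have hL2 : (1 - t) • w = x - t • z := by rw [← ht]; module
          refine ⟨(s - t) / (1 - t), ?_⟩
          have h1t : (1 : ℝ) - t ≠ 0 := sub_ne_zero.mpr (Ne.symm htne)
          apply smul_right_injective V h1t
          show (1 - t) • w = (1 - t) • (y + ((s - t) / (1 - t)) • d)
          rw [hL2, hs, hd]
          match_scalars
          all_goals (field_simp; try ring)
      have m1 : JoinedIn (C \ {x}) y w := by
        refine segJoin _ _ hy ⟨hwC, hwx⟩ fun p hp => ⟨hC.segment_subset hy.1 hwC hp, ?_⟩
        rintro rfl; exact hseg1 hp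
      have m2 : JoinedIn (C \ {x}) w z := by
        refine segJoin _ _ ⟨hwC, hwx⟩ hz fun p hp => ⟨hC.segment_subset hwC hz.1 hp, ?_⟩
        rintro rfl; exact hseg2 hp
      exact m1.trans m2
  rcases Set.eq_empty_or_nonempty (C \ {x}) with he | hne
  · rw [he]; exact isPreconnected_empty
  · obtain ⟨y0, hy0⟩ := hne
    exact (isPathConnected_iff.mpr ⟨⟨y0, hy0⟩, main⟩).isConnected.isPreconnected

end Punctured

section HalfSpace

local notation "E2" => EuclideanSpace ℝ (Fin 2)

lemma halfspace_convex : Convex ℝ {u : E2 | 0 ≤ u 0} := by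
  have : IsLinearMap ℝ (fun u : E2 => u 0) :=
    ⟨fun u v => rfl, fun c u => rfl⟩
  exact convex_halfSpace_ge this 0

lemma isPreconnected_halfBall_diff_singleton (v : E2) (hv : 0 ≤ v 0) {r : ℝ} (hr : 0 < r)
    (x : E2) : IsPreconnected ((Metric.ball v r ∩ {u : E2 | 0 ≤ u 0}) \ {x}) := by
  set e0 : E2 := EuclideanSpace.single (0 : Fin 2) (1 : ℝ) with he0
  set e1 : E2 := EuclideanSpace.single (1 : Fin 2) (1 : ℝ) with he1
  have hne0 : ‖e0‖ = 1 := by rw [he0, EuclideanSpace.norm_single, norm_one]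
  have hne1 : ‖e1‖ = 1 := by rw [he1, EuclideanSpace.norm_single, norm_one]
  set w₁ : E2 := v + (r/2) • e0 with hw1
  set w₂ : E2 := w₁ + (r/8) • e0 with hw2
  set w₃ : E2 := w₁ + (r/8) • e1 with hw3
  have hCconv : Convex ℝ (Metric.ball v r ∩ {u : E2 | 0 ≤ u 0}) :=
    (convex_ball v r).inter halfspace_convex
  have he00 : e0 0 = 1 := by rw [he0]; simp [EuclideanSpace.single_apply]
  have he10 : e1 0 = 0 := by rw [he1]; simp [EuclideanSpace.single_apply]
  have he01 : e0 1 = 0 := by rw [he0]; simp [EuclideanSpace.single_apply]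
  have he11 : e1 1 = 1 := by rw [he1]; simp [EuclideanSpace.single_apply]
  have hm1 : w₁ ∈ Metric.ball v r ∩ {u : E2 | 0 ≤ u 0} := by
    constructor
    · rw [Metric.mem_ball, dist_eq_norm, hw1]
      simp only [add_sub_cancel_left]
      rw [norm_smul, hne0, mul_one, Real.norm_eq_abs, abs_of_pos (by positivity)]
      linarith
    · show 0 ≤ w₁ 0
      rw [hw1]
      have : (v + (r/2) • e0) 0 = v 0 + (r/2) * e0 0 := rfl
      rw [this, he00]
      linarith
  have hm2 : w₂ ∈ Metric.ball v r ∩ {u : E2 | 0 ≤ u 0} := by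
    constructor
    · rw [Metric.mem_ball, dist_eq_norm, hw2, hw1]
      have : v + (r/2) • e0 + (r/8) • e0 - v = (r/2 + r/8) • e0 := by
        rw [add_smul]; abel
      rw [this, norm_smul, hne0, mul_one, Real.norm_eq_abs, abs_of_pos (by positivity)]
      linarith
    · show 0 ≤ w₂ 0
      rw [hw2]
      have : (w₁ + (r/8) • e0) 0 = w₁ 0 + (r/8) * e0 0 := rfl
      rw [this, he00]
      have : (0:ℝ) ≤ w₁ 0 := hm1.2
      linarith
  have hm3 : w₃ ∈ Metric.ball v r ∩ {u : E2 | 0 ≤ u 0} := by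
    constructor
    · rw [Metric.mem_ball, dist_eq_norm, hw3, hw1]
      have : v + (r/2) • e0 + (r/8) • e1 - v = (r/2) • e0 + (r/8) • e1 := by abel
      rw [this]
      calc ‖(r/2) • e0 + (r/8) • e1‖ ≤ ‖(r/2) • e0‖ + ‖(r/8) • e1‖ := norm_add_le _ _
        _ = |r/2| + |r/8| := by
              rw [norm_smul, norm_smul, hne0, hne1, mul_one, mul_one, Real.norm_eq_abs,
                Real.norm_eq_abs]
        _ < r := by rw [abs_of_pos (by positivity), abs_of_pos (by positivity)]; linarith
    · show 0 ≤ w₃ 0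
      rw [hw3]
      have : (w₁ + (r/8) • e1) 0 = w₁ 0 + (r/8) * e1 0 := rfl
      rw [this, he10]
      have : (0:ℝ) ≤ w₁ 0 := hm1.2
      linarith
  refine isPreconnected_convex_diff_singleton hCconv hm1 hm2 hm3 ?_ x
  intro a b hab
  rw [hw2, hw3, add_sub_cancel_left, add_sub_cancel_left, smul_smul, smul_smul] at hab
  have h0 : (a*(r/8)) * e0 0 = (b*(r/8)) * e1 0 := congrArg (fun v : E2 => v 0) hab
  have h1 : (a*(r/8)) * e0 1 = (b*(r/8)) * e1 1 := congrArg (fun v : E2 => v 1) hab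
  rw [he00, he10] at h0
  rw [he01, he11] at h1
  constructor
  · have ha : a * (r/8) = 0 := by linarith
    rcases mul_eq_zero.mp ha with h | h
    · exact h
    · exfalso; linarith
  · have hb : b * (r/8) = 0 := by linarith
    rcases mul_eq_zero.mp hb with h | h
    · exact h
    · exfalso; linarith

end HalfSpace

section Topology

/-- A space charted over the closed half-plane has, at every point, an open neighborhood
whose punctured version is preconnected. -/
lemma exists_punctured_nbhd (Y : Type*) [TopologicalSpace Y]
    [ChartedSpace (EuclideanHalfSpace 2) Y] (q : Y) :
    ∃ N : Set Y, IsOpen N ∧ q ∈ N ∧ IsPreconnected (N \ {q}) := by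
  set φ := chartAt (EuclideanHalfSpace 2) q with hφ
  have hq : q ∈ φ.source := mem_chart_source _ q
  have hqt : φ q ∈ φ.target := φ.map_source hq
  -- write the target as the preimage of an open set in the ambient Euclidean plane
  obtain ⟨U, hUopen, hUeq⟩ := isOpen_induced_iff.mp φ.open_target
  have hqU : (φ q).val ∈ U := by
    rw [← hUeq] at hqt; exact hqt
  obtain ⟨r, hr, hball⟩ := Metric.isOpen_iff.mp hUopen _ hqU
  set SH : Set (EuclideanHalfSpace 2) := Subtype.val ⁻¹' Metric.ball (φ q).val r with hSH
  have hSHopen : IsOpen SH := Metric.isOpen_ball.preimage continuous_subtype_val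
  have hSHsub : SH ⊆ φ.target := by
    intro p hp
    rw [← hUeq]
    exact hball hp
  have hqSH : φ q ∈ SH := Metric.mem_ball_self hr
  -- the punctured preimage in the half-space is preconnected
  have hpre : IsPreconnected (SH \ {φ q}) := by
    have himage : Subtype.val '' (SH \ {φ q})
        = (Metric.ball (φ q).val r ∩ {u : EuclideanSpace ℝ (Fin 2) | 0 ≤ u 0}) \ {(φ q).val} := by
      rw [Set.image_diff Subtype.val_injective, Set.image_singleton]
      congr 1
      rw [hSH, Set.image_preimage_eq_inter_range]
      congr 1
      exact range_euclideanHalfSpace 2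
    have hind : Topology.IsInducing (Subtype.val : EuclideanHalfSpace 2 → EuclideanSpace ℝ (Fin 2)) :=
      ⟨rfl⟩
    rw [← hind.isPreconnected_image, himage]
    exact isPreconnected_halfBall_diff_singleton _ (φ q).2 hr _
  -- transfer through the chart
  refine ⟨φ.source ∩ φ ⁻¹' SH, φ.isOpen_inter_preimage hSHopen, ⟨hq, hqSH⟩, ?_⟩
  have himg : (φ.source ∩ φ ⁻¹' SH) \ {q} = φ.symm '' (SH \ {φ q}) := by
    ext y
    constructor
    · rintro ⟨⟨hys, hySH⟩, hyq⟩
      refine ⟨φ y, ⟨hySH, ?_⟩, φ.left_inv hys⟩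
      intro hmem
      rw [Set.mem_singleton_iff] at hmem
      apply hyq
      have := congrArg φ.symm hmem
      rw [φ.left_inv hys, φ.left_inv hq] at this
      exact this
    · rintro ⟨p, ⟨hpSH, hpq⟩, rfl⟩
      have hpt : p ∈ φ.target := hSHsub hpSH
      refine ⟨⟨φ.map_target hpt, ?_⟩, ?_⟩
      · simp only [Set.mem_preimage]
        rw [φ.right_inv hpt]; exact hpSH
      · intro hmem
        rw [Set.mem_singleton_iff] at hmem
        apply hpq
        rw [Set.mem_singleton_iff, ← φ.right_inv hpt, hmem]
    
  rw [himg]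
  exact hpre.image _ (φ.continuousOn_symm.mono (fun p hp => hSHsub hp.1))

/-- Final topological contradiction: a clopen piece argument. -/
lemma no_separation {Y : Type*} [TopologicalSpace Y] [T2Space Y] [PreconnectedSpace Y]
    {q : Y} {A B : Set Y} (hA : IsClosed A) (hB : IsClosed B)
    (hcover : ∀ y : Y, y ∈ A ∨ y ∈ B ∨ y = q) (hAB : A ∩ B ⊆ {q})
    (hb : ∃ b ∈ B, b ≠ q)
    {N : Set Y} (hNopen : IsOpen N) (hqN : q ∈ N) (hNB : (N \ {q}) ∩ B = ∅) :
    False := by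
  set Bq := B \ {q} with hBq
  have hBqopen : IsOpen Bq := by
    have : Bq = (A ∪ {q})ᶜ := by
      ext y
      constructor
      · rintro ⟨hyB, hyq⟩ hmem
        rcases hmem with hyA | hyq'
        · exact hyq (hAB ⟨hyA, hyB⟩)
        · exact hyq hyq'
      · intro hy
        rw [Set.mem_compl_iff, Set.mem_union] at hy
        push_neg at hy
        rcases hcover y with h | h | h
        · exact absurd h hy.1
        · exact ⟨h, hy.2⟩
        · exact absurd h hy.2
    rw [this]
    exact (hA.union isClosed_singleton).isOpen_compl
  have hBqclosed : IsClosed Bq := by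
    rw [← closure_subset_iff_isClosed]
    intro y hy
    have hyB : y ∈ B := closure_minimal Set.diff_subset hB hy
    refine ⟨hyB, ?_⟩
    intro hyq
    rw [Set.mem_singleton_iff] at hyq
    subst hyq
    rw [_root_.mem_closure_iff] at hy
    obtain ⟨z, hzN, hzBq⟩ := hy N hNopen hqN
    have : z ∈ (N \ {y}) ∩ B := ⟨⟨hzN, hzBq.2⟩, hzBq.1⟩
    rw [hNB] at this
    exact this
  have huniv : Bq = Set.univ := (IsClopen.eq_univ ⟨hBqclosed, hBqopen⟩ (by
    obtain ⟨b, hbB, hbq⟩ := hb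
    exact ⟨b, hbB, by simpa using hbq⟩))
  have : q ∈ Bq := by rw [huniv]; trivial
  exact this.2 rfl

/-- A length space is preconnected. -/
lemma IsLengthSpace.preconnectedSpace {Z : Type*} [MetricSpace Z] (h : IsLengthSpace Z) :
    PreconnectedSpace Z := by
  constructor
  rcases isEmpty_or_nonempty Z with hZ | hZ
  · convert isPreconnected_empty
    exact Set.univ_eq_empty_iff.mpr hZ
  obtain ⟨x⟩ := hZ
  apply isPreconnected_of_forall x
  intro y _
  obtain ⟨γ, ha, hb⟩ := (h.exists_curve x y).some
  exact ⟨γ.trace, Set.subset_univ _, by rw [← ha]; exact γ.start_mem_trace,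
    by rw [← hb]; exact γ.end_mem_trace, γ.trace_preconnected⟩

end Topology

section Main

open GromovHausdorff in
/-- Core lemma: eventually, all separating curves have length bounded below. -/
lemma eventual_length_bound
    (X : ℕ → Type) [∀ n, MetricSpace (X n)] [∀ n, CompactSpace (X n)] [∀ n, Nonempty (X n)]
    (hXlen : ∀ n, IsLengthSpace (X n))
    (Y : Type) [MetricSpace Y] [CompactSpace Y] [Nonempty Y]
    [ChartedSpace (EuclideanHalfSpace 2) Y] [T2Space Y]
    (hYlen : IsLengthSpace Y)
    (hGH : Tendsto (fun n => GromovHausdorff.ghDist (X n) Y) atTop (𝓝 0))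
    (δ : ℝ) (hδ : 0 < δ)
    (E F : ∀ n, Set (X n))
    (hEcont : ∀ n, IsCompact (E n) ∧ IsConnected (E n))
    (hFcont : ∀ n, IsCompact (F n) ∧ IsConnected (F n))
    (hdiam : ∀ n, δ ≤ Metric.diam (E n) ∧ δ ≤ Metric.diam (F n)) :
    ∃ m : ℝ, 0 < m ∧ ∀ᶠ n in atTop,
      ∀ γ ∈ separatingCurves (E n) (F n), ENNReal.ofReal m ≤ γ.length := by
  by_contra hcon
  push_neg at hcon
  -- extract a subsequence with short separating curves
  have hfreq : ∀ j : ℕ, ∃ᶠ n in atTop,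
      ∃ γ ∈ separatingCurves (E n) (F n), γ.length < ENNReal.ofReal (1/(j+1)) := by
    intro j
    have h1j : (0:ℝ) < 1/(j+1) := by positivity
    have := hcon (1/(j+1)) h1j
    exact this
  obtain ⟨φ, hφmono, hφ⟩ := Filter.extraction_forall_of_frequently hfreq
  classical
  -- notation for the chosen short curves
  choose γ hγmem hγlen using hφ
  -- basic data
  set T : ∀ j, Set (X (φ j)) := fun j => (γ j).trace with hT
  have hTne : ∀ j, (T j).Nonempty := fun j => ⟨_, (γ j).start_mem_trace⟩
  set p : ∀ j, X (φ j) := fun j => (γ j).toFun (γ j).a with hp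
  have hpT : ∀ j, p j ∈ T j := fun j => (γ j).start_mem_trace
  have hrT : ∀ j, ∀ t ∈ T j, dist (p j) t ≤ 1/(j+1) := by
    intro j t ht
    obtain ⟨c, hcI, rfl⟩ := ht
    have h1 : edist (p j) ((γ j).toFun c) ≤ (γ j).length :=
      (γ j).edist_le_length ⟨le_rfl, (γ j).hab⟩ hcI
    have h2 : edist (p j) ((γ j).toFun c) ≤ ENNReal.ofReal (1/(j+1)) :=
      h1.trans (hγlen j).le
    rw [edist_dist] at h2
    have := ENNReal.toReal_mono ENNReal.ofReal_ne_top h2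
    rwa [ENNReal.toReal_ofReal dist_nonneg, ENNReal.toReal_ofReal (by positivity)] at this
  -- the two sides
  set U : ∀ j, Set (X (φ j)) :=
    fun j => ⋃ x ∈ E (φ j), connectedComponentIn (T j)ᶜ x with hU
  set V : ∀ j, Set (X (φ j)) := fun j => (T j)ᶜ \ U j with hV
  have hTdisj : ∀ j, (T j) ∩ (E (φ j) ∪ F (φ j)) = ∅ := fun j => (hγmem j).2.1
  have hET : ∀ j, E (φ j) ⊆ (T j)ᶜ := by
    intro j x hx hxT
    exact absurd (hTdisj j ▸ ⟨hxT, Or.inl hx⟩) (Set.notMem_empty x)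
  have hFT : ∀ j, F (φ j) ⊆ (T j)ᶜ := by
    intro j x hx hxT
    exact absurd (hTdisj j ▸ ⟨hxT, Or.inr hx⟩) (Set.notMem_empty x)
  have hEU : ∀ j, E (φ j) ⊆ U j := by
    intro j x hx
    exact Set.mem_biUnion hx (mem_connectedComponentIn (hET j hx))
  have hFV : ∀ j, F (φ j) ⊆ V j := by
    intro j y hy
    refine ⟨hFT j hy, ?_⟩
    intro hyU
    obtain ⟨x, hx, hyc⟩ := Set.mem_iUnion₂.mp hyU
    exact (hγmem j).2.2 x hx y hy hyc
  have hUne : ∀ j, (U j).Nonempty := fun j => ((hEcont (φ j)).2.nonempty).mono (hEU j)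
  have hVne : ∀ j, (V j).Nonempty := fun j => ((hFcont (φ j)).2.nonempty).mono (hFV j)
  -- cross inequality inside X (φ j)
  have hcross : ∀ j, ∀ u ∈ U j, ∀ v ∈ V j,
      dist u (p j) + dist v (p j) ≤ dist u v + 2 * (1/(j+1)) := by
    intro j u hu v hv
    obtain ⟨x, hxE, huc⟩ := Set.mem_iUnion₂.mp hu
    have huT : u ∈ (T j)ᶜ := connectedComponentIn_subset _ _ huc
    have hvc : v ∉ connectedComponentIn (T j)ᶜ u := by
      intro hmem
      have : connectedComponentIn (T j)ᶜ x = connectedComponentIn (T j)ᶜ u :=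
        connectedComponentIn_eq huc
      exact hv.2 (Set.mem_biUnion hxE (this ▸ hmem))
    have hk := key_separation (hXlen (φ j)) (hTne j) huT hvc
    -- dist u p ≤ infDist u T + 1/(j+1)
    have hup : dist u (p j) ≤ infDist u (T j) + 1/(j+1) := by
      refine real_le_of_forall_pos fun ε hε => ?_
      obtain ⟨t, htT, htd⟩ := (infDist_lt_iff (hTne j)).mp
        (lt_add_of_pos_right (infDist u (T j)) hε)
      calc dist u (p j) ≤ dist u t + dist t (p j) := dist_triangle _ _ _
        _ ≤ (infDist u (T j) + ε) + (1/(j+1)) := by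
            have := hrT j t htT
            rw [dist_comm (p j) t] at this
            exact add_le_add htd.le this
        _ = infDist u (T j) + 1/(j+1) + ε := by ring
    have hvp : dist v (p j) ≤ infDist v (T j) + 1/(j+1) := by
      refine real_le_of_forall_pos fun ε hε => ?_
      obtain ⟨t, htT, htd⟩ := (infDist_lt_iff (hTne j)).mp
        (lt_add_of_pos_right (infDist v (T j)) hε)
      calc dist v (p j) ≤ dist v t + dist t (p j) := dist_triangle _ _ _
        _ ≤ (infDist v (T j) + ε) + (1/(j+1)) := by
            have := hrT j t htT
            rw [dist_comm (p j) t] at this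
            exact add_le_add htd.le this
        _ = infDist v (T j) + 1/(j+1) + ε := by ring
    calc dist u (p j) + dist v (p j)
        ≤ (infDist u (T j) + 1/(j+1)) + (infDist v (T j) + 1/(j+1)) := add_le_add hup hvp
      _ = (infDist u (T j) + infDist v (T j)) + 2 * (1/(j+1)) := by ring
      _ ≤ dist u v + 2 * (1/(j+1)) := by linarith
  -- Gromov–Hausdorff couplings
  set ι : ∀ j, X (φ j) → OptimalGHCoupling (X (φ j)) Y := fun j => optimalGHInjl _ _ with hι
  set ψ : ∀ j, Y → OptimalGHCoupling (X (φ j)) Y := fun j => optimalGHInjr _ _ with hψ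
  have hιiso : ∀ j, Isometry (ι j) := fun j => isometry_optimalGHInjl _ _
  have hψiso : ∀ j, Isometry (ψ j) := fun j => isometry_optimalGHInjr _ _
  have hHD : ∀ j, hausdorffDist (Set.range (ι j)) (Set.range (ψ j)) = ghDist (X (φ j)) Y :=
    fun j => hausdorffDist_optimal
  have hghnn : ∀ j, 0 ≤ ghDist (X (φ j)) Y := by
    intro j
    rw [← hHD j]
    exact hausdorffDist_nonneg
  set κ : ℕ → ℝ := fun j => ghDist (X (φ j)) Y + 1/(j+1) with hκ
  have hκpos : ∀ j, 0 < κ j := fun j => by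
    have h1 := hghnn j
    have h2 : (0:ℝ) < 1/((j:ℝ)+1) := by positivity
    show 0 < ghDist (X (φ j)) Y + 1/(j+1)
    linarith
  have hfin : ∀ j, EMetric.hausdorffEdist (Set.range (ι j)) (Set.range (ψ j)) ≠ ⊤ := by
    intro j
    exact Metric.hausdorffEdist_ne_top_of_nonempty_of_bounded
      (Set.range_nonempty _) (Set.range_nonempty _)
      (isCompact_range (hιiso j).continuous).isBounded
      (isCompact_range (hψiso j).continuous).isBounded
  have hHDlt : ∀ j, hausdorffDist (Set.range (ι j)) (Set.range (ψ j)) < κ j := by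
    intro j
    rw [hHD j, hκ]
    exact lt_add_of_pos_right _ (by positivity)
  have hXY : ∀ j, ∀ x : X (φ j), ∃ y : Y, dist (ι j x) (ψ j y) < κ j := by
    intro j x
    obtain ⟨z, hz, hd⟩ := exists_dist_lt_of_hausdorffDist_lt (Set.mem_range_self x)
      (hHDlt j) (hfin j)
    obtain ⟨y, rfl⟩ := hz
    exact ⟨y, hd⟩
  have hYX : ∀ j, ∀ y : Y, ∃ x : X (φ j), dist (ι j x) (ψ j y) < κ j := by
    intro j y
    obtain ⟨z, hz, hd⟩ := exists_dist_lt_of_hausdorffDist_lt' (Set.mem_range_self y)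
      (hHDlt j) (hfin j)
    obtain ⟨x, rfl⟩ := hz
    exact ⟨x, hd⟩
  -- reference point q in Y near the small trace
  choose qY hqY using fun j => hXY j (p j)
  -- potential functions
  set f : ∀ j : ℕ, Y → ℝ := fun j y => infDist (ψ j y) (ι j '' U j) with hf
  set g : ∀ j : ℕ, Y → ℝ := fun j y => infDist (ψ j y) (ι j '' V j) with hg
  have hfnn : ∀ j y, 0 ≤ f j y := fun j y => infDist_nonneg
  have hgnn : ∀ j y, 0 ≤ g j y := fun j y => infDist_nonneg
  have hfLip : ∀ j, ∀ y y' : Y, f j y ≤ f j y' + dist y y' := by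
    intro j y y'
    calc f j y ≤ f j y' + dist (ψ j y) (ψ j y') := infDist_le_infDist_add_dist
      _ = f j y' + dist y y' := by rw [(hψiso j).dist_eq]
  have hgLip : ∀ j, ∀ y y' : Y, g j y ≤ g j y' + dist y y' := by
    intro j y y'
    calc g j y ≤ g j y' + dist (ψ j y) (ψ j y') := infDist_le_infDist_add_dist
      _ = g j y' + dist y y' := by rw [(hψiso j).dist_eq]
  have hfle : ∀ j, ∀ y : Y, ∀ x : X (φ j), x ∈ U j → f j y ≤ dist (ψ j y) (ι j x) :=
    fun j y x hx => infDist_le_dist_of_mem (Set.mem_image_of_mem _ hx)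
  have hgle : ∀ j, ∀ y : Y, ∀ x : X (φ j), x ∈ V j → g j y ≤ dist (ψ j y) (ι j x) :=
    fun j y x hx => infDist_le_dist_of_mem (Set.mem_image_of_mem _ hx)
  have hfapx : ∀ j, ∀ y : Y, ∃ u ∈ U j, dist (ψ j y) (ι j u) < f j y + 1/(j+1) := by
    intro j y
    have hτ : (0:ℝ) < 1/((j:ℝ)+1) := by positivity
    obtain ⟨u', hu', hud⟩ := (infDist_lt_iff ((hUne j).image _)).mp
      (lt_add_of_pos_right (f j y) hτ)
    obtain ⟨u, huU, rfl⟩ := hu'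
    exact ⟨u, huU, hud⟩
  have hgapx : ∀ j, ∀ z : Y, ∃ v ∈ V j, dist (ψ j z) (ι j v) < g j z + 1/(j+1) := by
    intro j z
    have hτ : (0:ℝ) < 1/((j:ℝ)+1) := by positivity
    obtain ⟨v', hv', hvd⟩ := (infDist_lt_iff ((hVne j).image _)).mp
      (lt_add_of_pos_right (g j z) hτ)
    obtain ⟨v, hvV, rfl⟩ := hv'
    exact ⟨v, hvV, hvd⟩
  have hVmem : ∀ j, ∀ x : X (φ j), x ∈ (T j)ᶜ → x ∉ U j → x ∈ V j :=
    fun j x h1 h2 => ⟨h1, h2⟩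
  clear_value f g
  clear_value V
  clear_value U
  clear_value κ ι ψ p T
  -- (F2): covering estimate
  have hmin : ∀ j, ∀ y : Y,
      min (f j y) (min (g j y) (dist y (qY j))) ≤ 2 * κ j + 1/(j+1) := by
    intro j y
    obtain ⟨x, hx⟩ := hYX j y
    by_cases hxT : x ∈ T j
    · refine le_trans (min_le_right _ _) (le_trans (min_le_right _ _) ?_)
      have h1 : dist y (qY j) = dist (ψ j y) (ψ j (qY j)) := ((hψiso j).dist_eq _ _).symm
      rw [h1]
      calc dist (ψ j y) (ψ j (qY j))
          ≤ dist (ψ j y) (ι j x) + dist (ι j x) (ι j (p j)) + dist (ι j (p j)) (ψ j (qY j)) :=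
            dist_triangle4 _ _ _ _
        _ ≤ κ j + (1/(j+1)) + κ j := by
            refine add_le_add (add_le_add ?_ ?_) (hqY j).le
            · rw [dist_comm]; exact hx.le
            · rw [(hιiso j).dist_eq, dist_comm]
              exact hrT j x hxT
        _ = 2 * κ j + 1/(j+1) := by ring
    · by_cases hxU : x ∈ U j
      · refine le_trans (min_le_left _ _) ?_
        calc f j y ≤ dist (ψ j y) (ι j x) := hfle j y x hxU
          _ ≤ 2 * κ j + 1/(j+1) := by
              rw [dist_comm]
              have h2 : (0:ℝ) < 1/((j:ℝ)+1) := by positivity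
              have h3 := hκpos j
              refine hx.le.trans ?_
              show κ j ≤ 2 * κ j + 1/((j:ℝ)+1)
              linarith
      · have hxV : x ∈ V j := hVmem j x hxT hxU
        refine le_trans (min_le_right _ _) (le_trans (min_le_left _ _) ?_)
        calc g j y ≤ dist (ψ j y) (ι j x) := hgle j y x hxV
          _ ≤ 2 * κ j + 1/(j+1) := by
              rw [dist_comm]
              have h2 : (0:ℝ) < 1/((j:ℝ)+1) := by positivity
              have h3 := hκpos j
              refine hx.le.trans ?_
              show κ j ≤ 2 * κ j + 1/((j:ℝ)+1)
              linarith
  -- (F3): cross estimate transferred to Y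
  have hcrossY : ∀ j, ∀ y z : Y,
      dist y (qY j) + dist z (qY j)
        ≤ dist y z + 2 * f j y + 2 * g j z + (2 * κ j + 6 * (1/(j+1))) := by
    intro j y z
    obtain ⟨u, huU, hud⟩ := hfapx j y
    obtain ⟨v, hvV, hvd⟩ := hgapx j z
    have hc := hcross j u huU v hvV
    have d1 : dist y (qY j) ≤ (f j y + 1/(j+1)) + dist u (p j) + κ j := by
      have h1 : dist y (qY j) = dist (ψ j y) (ψ j (qY j)) := ((hψiso j).dist_eq _ _).symm
      rw [h1]
      calc dist (ψ j y) (ψ j (qY j))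
          ≤ dist (ψ j y) (ι j u) + dist (ι j u) (ι j (p j)) + dist (ι j (p j)) (ψ j (qY j)) :=
            dist_triangle4 _ _ _ _
        _ ≤ (f j y + 1/(j+1)) + dist u (p j) + κ j := by
            refine add_le_add (add_le_add hud.le ?_) (hqY j).le
            rw [(hιiso j).dist_eq]
    have d2 : dist z (qY j) ≤ (g j z + 1/(j+1)) + dist v (p j) + κ j := by
      have h1 : dist z (qY j) = dist (ψ j z) (ψ j (qY j)) := ((hψiso j).dist_eq _ _).symm
      rw [h1]
      calc dist (ψ j z) (ψ j (qY j))
          ≤ dist (ψ j z) (ι j v) + dist (ι j v) (ι j (p j)) + dist (ι j (p j)) (ψ j (qY j)) :=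
            dist_triangle4 _ _ _ _
        _ ≤ (g j z + 1/(j+1)) + dist v (p j) + κ j := by
            refine add_le_add (add_le_add hvd.le ?_) (hqY j).le
            rw [(hιiso j).dist_eq]
    have d3 : dist u v ≤ (f j y + 1/(j+1)) + dist y z + (g j z + 1/(j+1)) := by
      have h1 : dist u v = dist (ι j u) (ι j v) := ((hιiso j).dist_eq _ _).symm
      rw [h1]
      calc dist (ι j u) (ι j v)
          ≤ dist (ι j u) (ψ j y) + dist (ψ j y) (ψ j z) + dist (ψ j z) (ι j v) :=
            dist_triangle4 _ _ _ _
        _ ≤ (f j y + 1/(j+1)) + dist y z + (g j z + 1/(j+1)) := by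
            refine add_le_add (add_le_add ?_ ?_) hvd.le
            · rw [dist_comm]; exact hud.le
            · rw [(hψiso j).dist_eq]
    linarith
  -- (F4): big sets on both sides
  have hEpts : ∀ j, ∃ e e', e ∈ E (φ j) ∧ e' ∈ E (φ j) ∧ δ/2 ≤ dist e e' := by
    intro j
    by_contra hcon2
    push_neg at hcon2
    have : diam (E (φ j)) ≤ δ/2 := by
      refine diam_le_of_forall_dist_le (by positivity) fun a ha b hb => ?_
      have := hcon2 a b ha hb
      linarith
    have := (hdiam (φ j)).1
    linarith
  have hFpts : ∀ j, ∃ e e', e ∈ F (φ j) ∧ e' ∈ F (φ j) ∧ δ/2 ≤ dist e e' := by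
    intro j
    by_contra hcon2
    push_neg at hcon2
    have : diam (F (φ j)) ≤ δ/2 := by
      refine diam_le_of_forall_dist_le (by positivity) fun a ha b hb => ?_
      have := hcon2 a b ha hb
      linarith
    have := (hdiam (φ j)).2
    linarith
  choose eE eE' heE heE' heEd using hEpts
  choose eF eF' heF heF' heFd using hFpts
  choose y1 hy1 using fun j => hXY j (eE j)
  choose y1' hy1' using fun j => hXY j (eE' j)
  choose z1 hz1 using fun j => hXY j (eF j)
  choose z1' hz1' using fun j => hXY j (eF' j)
  have hfy1 : ∀ j, f j (y1 j) ≤ κ j := by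
    intro j
    calc f j (y1 j) ≤ dist (ψ j (y1 j)) (ι j (eE j)) := hfle j _ _ (hEU j (heE j))
      _ ≤ κ j := by rw [dist_comm]; exact (hy1 j).le
  have hfy1' : ∀ j, f j (y1' j) ≤ κ j := by
    intro j
    calc f j (y1' j) ≤ dist (ψ j (y1' j)) (ι j (eE' j)) := hfle j _ _ (hEU j (heE' j))
      _ ≤ κ j := by rw [dist_comm]; exact (hy1' j).le
  have hgz1 : ∀ j, g j (z1 j) ≤ κ j := by
    intro j
    calc g j (z1 j) ≤ dist (ψ j (z1 j)) (ι j (eF j)) := hgle j _ _ (hFV j (heF j))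
      _ ≤ κ j := by rw [dist_comm]; exact (hz1 j).le
  have hgz1' : ∀ j, g j (z1' j) ≤ κ j := by
    intro j
    calc g j (z1' j) ≤ dist (ψ j (z1' j)) (ι j (eF' j)) := hgle j _ _ (hFV j (heF' j))
      _ ≤ κ j := by rw [dist_comm]; exact (hz1' j).le
  have hy1far : ∀ j, δ/2 - 2 * κ j ≤ dist (y1 j) (y1' j) := by
    intro j
    have h1 : dist (eE j) (eE' j) = dist (ι j (eE j)) (ι j (eE' j)) :=
      ((hιiso j).dist_eq _ _).symm
    have h2 : dist (ι j (eE j)) (ι j (eE' j))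
        ≤ dist (ι j (eE j)) (ψ j (y1 j)) + dist (ψ j (y1 j)) (ψ j (y1' j))
          + dist (ψ j (y1' j)) (ι j (eE' j)) := dist_triangle4 _ _ _ _
    have h3 : dist (ψ j (y1 j)) (ψ j (y1' j)) = dist (y1 j) (y1' j) := (hψiso j).dist_eq _ _
    have h4 := heEd j
    have h5 := (hy1 j).le
    have h6 := (hy1' j).le
    rw [h3] at h2
    rw [h1] at h4
    rw [dist_comm (ψ j (y1' j)) (ι j (eE' j))] at h2
    linarith
  have hz1far : ∀ j, δ/2 - 2 * κ j ≤ dist (z1 j) (z1' j) := by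
    intro j
    have h1 : dist (eF j) (eF' j) = dist (ι j (eF j)) (ι j (eF' j)) :=
      ((hιiso j).dist_eq _ _).symm
    have h2 : dist (ι j (eF j)) (ι j (eF' j))
        ≤ dist (ι j (eF j)) (ψ j (z1 j)) + dist (ψ j (z1 j)) (ψ j (z1' j))
          + dist (ψ j (z1' j)) (ι j (eF' j)) := dist_triangle4 _ _ _ _
    have h3 : dist (ψ j (z1 j)) (ψ j (z1' j)) = dist (z1 j) (z1' j) := (hψiso j).dist_eq _ _
    have h4 := heFd j
    have h5 := (hz1 j).le
    have h6 := (hz1' j).le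
    rw [h3] at h2
    rw [h1] at h4
    rw [dist_comm (ψ j (z1' j)) (ι j (eF' j))] at h2
    linarith
  -- tendsto facts
  have hτ0 : Tendsto (fun j : ℕ => 1/((j:ℝ)+1)) atTop (𝓝 0) :=
    tendsto_one_div_add_atTop_nhds_zero_nat
  have hκ0 : Tendsto κ atTop (𝓝 0) := by
    have h1 : Tendsto (fun j => ghDist (X (φ j)) Y) atTop (𝓝 0) :=
      hGH.comp hφmono.tendsto_atTop
    rw [hκ]
    simpa using h1.add hτ0
  obtain ⟨K, hK⟩ : ∃ K, ∀ j, κ j ≤ K := by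
    obtain ⟨K, hK⟩ := hκ0.bddAbove_range
    exact ⟨K, fun j => hK (Set.mem_range_self j)⟩
  set M : ℝ := Metric.diam (Set.univ : Set Y) + K with hM
  have hfM : ∀ j, ∀ y : Y, f j y ≤ M := by
    intro j y
    obtain ⟨u, huU⟩ := hUne j
    obtain ⟨yu, hyu⟩ := hXY j u
    calc f j y ≤ dist (ψ j y) (ι j u) := hfle j y u huU
      _ ≤ dist (ψ j y) (ψ j yu) + dist (ψ j yu) (ι j u) := dist_triangle _ _ _
      _ ≤ Metric.diam (Set.univ : Set Y) + κ j := by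
          refine add_le_add ?_ ?_
          · rw [(hψiso j).dist_eq]
            exact dist_le_diam_of_mem isCompact_univ.isBounded (Set.mem_univ _) (Set.mem_univ _)
          · rw [dist_comm]; exact (hyu).le
      _ ≤ M := by rw [hM]; linarith [hK j]
  have hgM : ∀ j, ∀ y : Y, g j y ≤ M := by
    intro j y
    obtain ⟨v, hvV⟩ := hVne j
    obtain ⟨yv, hyv⟩ := hXY j v
    calc g j y ≤ dist (ψ j y) (ι j v) := hgle j y v hvV
      _ ≤ dist (ψ j y) (ψ j yv) + dist (ψ j yv) (ι j v) := dist_triangle _ _ _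
      _ ≤ Metric.diam (Set.univ : Set Y) + κ j := by
          refine add_le_add ?_ ?_
          · rw [(hψiso j).dist_eq]
            exact dist_le_diam_of_mem isCompact_univ.isBounded (Set.mem_univ _) (Set.mem_univ _)
          · rw [dist_comm]; exact (hyv).le
      _ ≤ M := by rw [hM]; linarith [hK j]
  -- ultrafilter limits
  set 𝒰 : Ultrafilter ℕ := Ultrafilter.of atTop with h𝒰def
  have h𝒰 : (𝒰 : Filter ℕ) ≤ atTop := Ultrafilter.of_le _
  have hlimR : ∀ u : ℕ → ℝ, (∀ j, u j ∈ Set.Icc (0:ℝ) M) →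
      ∃ L ∈ Set.Icc (0:ℝ) M, Tendsto u 𝒰 (𝓝 L) := by
    intro u hu
    obtain ⟨L, hL, hLle⟩ := isCompact_Icc.ultrafilter_le_nhds (Ultrafilter.map u 𝒰)
      (by
        rw [Ultrafilter.coe_map, Filter.le_principal_iff, Filter.mem_map]
        exact Filter.univ_mem' hu)
    exact ⟨L, hL, by rwa [Ultrafilter.coe_map] at hLle⟩
  have hlimY : ∀ u : ℕ → Y, ∃ y : Y, Tendsto u 𝒰 (𝓝 y) := by
    intro u
    obtain ⟨y, _, hy⟩ := isCompact_univ.ultrafilter_le_nhds (Ultrafilter.map u 𝒰)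
      (by rw [Filter.principal_univ]; exact le_top)
    exact ⟨y, by rwa [Ultrafilter.coe_map] at hy⟩
  choose FF hFF0 hFFt using fun y => hlimR (fun j => f j y) (fun j => ⟨hfnn j y, hfM j y⟩)
  choose GG hGG0 hGGt using fun y => hlimR (fun j => g j y) (fun j => ⟨hgnn j y, hgM j y⟩)
  obtain ⟨qq, hqq⟩ := hlimY qY
  obtain ⟨a1, ha1⟩ := hlimY y1
  obtain ⟨a2, ha2⟩ := hlimY y1'
  obtain ⟨b1, hb1⟩ := hlimY z1
  obtain ⟨b2, hb2⟩ := hlimY z1'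
  have hκ𝒰 : Tendsto κ 𝒰 (𝓝 0) := hκ0.mono_left h𝒰
  have hτ𝒰 : Tendsto (fun j : ℕ => 1/((j:ℝ)+1)) 𝒰 (𝓝 0) := hτ0.mono_left h𝒰
  -- limits of the marked points lie in the zero sets
  have hFa1 : FF a1 = 0 := by
    have hub : ∀ j, f j a1 ≤ κ j + dist (y1 j) a1 := by
      intro j
      calc f j a1 ≤ f j (y1 j) + dist a1 (y1 j) := hfLip j a1 (y1 j)
        _ ≤ κ j + dist (y1 j) a1 := by
            rw [dist_comm a1 (y1 j)]
            exact add_le_add_left (hfy1 j) _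
    have hRt : Tendsto (fun j => κ j + dist (y1 j) a1) 𝒰 (𝓝 0) := by
      simpa using hκ𝒰.add (ha1.dist (tendsto_const_nhds (x := a1)))
    have hle := le_of_tendsto_of_tendsto' (hFFt a1) hRt hub
    linarith [(hFF0 a1).1]
  have hFa2 : FF a2 = 0 := by
    have hub : ∀ j, f j a2 ≤ κ j + dist (y1' j) a2 := by
      intro j
      calc f j a2 ≤ f j (y1' j) + dist a2 (y1' j) := hfLip j a2 (y1' j)
        _ ≤ κ j + dist (y1' j) a2 := by
            rw [dist_comm a2 (y1' j)]
            exact add_le_add_left (hfy1' j) _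
    have hRt : Tendsto (fun j => κ j + dist (y1' j) a2) 𝒰 (𝓝 0) := by
      simpa using hκ𝒰.add (ha2.dist (tendsto_const_nhds (x := a2)))
    have hle := le_of_tendsto_of_tendsto' (hFFt a2) hRt hub
    linarith [(hFF0 a2).1]
  have hGb1 : GG b1 = 0 := by
    have hub : ∀ j, g j b1 ≤ κ j + dist (z1 j) b1 := by
      intro j
      calc g j b1 ≤ g j (z1 j) + dist b1 (z1 j) := hgLip j b1 (z1 j)
        _ ≤ κ j + dist (z1 j) b1 := by
            rw [dist_comm b1 (z1 j)]
            exact add_le_add_left (hgz1 j) _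
    have hRt : Tendsto (fun j => κ j + dist (z1 j) b1) 𝒰 (𝓝 0) := by
      simpa using hκ𝒰.add (hb1.dist (tendsto_const_nhds (x := b1)))
    have hle := le_of_tendsto_of_tendsto' (hGGt b1) hRt hub
    linarith [(hGG0 b1).1]
  have hGb2 : GG b2 = 0 := by
    have hub : ∀ j, g j b2 ≤ κ j + dist (z1' j) b2 := by
      intro j
      calc g j b2 ≤ g j (z1' j) + dist b2 (z1' j) := hgLip j b2 (z1' j)
        _ ≤ κ j + dist (z1' j) b2 := by
            rw [dist_comm b2 (z1' j)]
            exact add_le_add_left (hgz1' j) _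
    have hRt : Tendsto (fun j => κ j + dist (z1' j) b2) 𝒰 (𝓝 0) := by
      simpa using hκ𝒰.add (hb2.dist (tendsto_const_nhds (x := b2)))
    have hle := le_of_tendsto_of_tendsto' (hGGt b2) hRt hub
    linarith [(hGG0 b2).1]
  -- the far-apart property in the limit
  have ha12 : δ/2 ≤ dist a1 a2 := by
    have hlhs : Tendsto (fun j => δ/2 - 2 * κ j) 𝒰 (𝓝 (δ/2)) := by
      simpa using (tendsto_const_nhds (x := δ/2) (f := (𝒰 : Filter ℕ))).sub (hκ𝒰.const_mul 2)
    exact le_of_tendsto_of_tendsto' hlhs (ha1.dist ha2) hy1far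
  have hb12 : δ/2 ≤ dist b1 b2 := by
    have hlhs : Tendsto (fun j => δ/2 - 2 * κ j) 𝒰 (𝓝 (δ/2)) := by
      simpa using (tendsto_const_nhds (x := δ/2) (f := (𝒰 : Filter ℕ))).sub (hκ𝒰.const_mul 2)
    exact le_of_tendsto_of_tendsto' hlhs (hb1.dist hb2) hz1far
  -- covering in the limit
  have hcovq : ∀ y : Y, FF y = 0 ∨ GG y = 0 ∨ y = qq := by
    intro y
    have hLt : Tendsto (fun j => min (f j y) (min (g j y) (dist y (qY j)))) 𝒰
        (𝓝 (min (FF y) (min (GG y) (dist y qq)))) :=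
      (hFFt y).min ((hGGt y).min ((tendsto_const_nhds (x := y)).dist hqq))
    have hRt : Tendsto (fun j => 2 * κ j + 1/((j:ℝ)+1)) 𝒰 (𝓝 0) := by
      simpa using (hκ𝒰.const_mul 2).add hτ𝒰
    have hle := le_of_tendsto_of_tendsto' hLt hRt (fun j => hmin j y)
    rcases le_or_gt (FF y) 0 with h | h
    · left; linarith [(hFF0 y).1]
    rcases le_or_gt (GG y) 0 with h' | h'
    · right; left; linarith [(hGG0 y).1]
    · right; right
      have hd : dist y qq ≤ 0 := by
        by_contra hd'
        push_neg at hd'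
        have : 0 < min (FF y) (min (GG y) (dist y qq)) := lt_min h (lt_min h' hd')
        linarith
      exact dist_le_zero.mp hd
  -- cross inequality in the limit
  have hcrossq : ∀ y z : Y, FF y = 0 → GG z = 0 →
      dist y qq + dist z qq ≤ dist y z := by
    intro y z hy hz
    have hLt : Tendsto (fun j => dist y (qY j) + dist z (qY j)) 𝒰
        (𝓝 (dist y qq + dist z qq)) :=
      ((tendsto_const_nhds (x := y)).dist hqq).add ((tendsto_const_nhds (x := z)).dist hqq)
    have hRt : Tendsto
        (fun j => dist y z + 2 * f j y + 2 * g j z + (2 * κ j + 6 * (1/((j:ℝ)+1)))) 𝒰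
        (𝓝 (dist y z + 2 * FF y + 2 * GG z + 0)) := by
      refine Tendsto.add (Tendsto.add (Tendsto.add tendsto_const_nhds
        ((hFFt y).const_mul 2)) ((hGGt z).const_mul 2)) ?_
      simpa using (hκ𝒰.const_mul 2).add (hτ𝒰.const_mul 6)
    have hle := le_of_tendsto_of_tendsto' hLt hRt (fun j => hcrossY j y z)
    rw [hy, hz] at hle
    linarith
  -- the two closed sets
  set A : Set Y := {y | FF y = 0} with hA
  set B : Set Y := {y | GG y = 0} with hB
  have hAclosed : IsClosed A := by
    rw [← closure_subset_iff_isClosed]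
    intro y hy
    show FF y = 0
    have h0 : 0 ≤ FF y := (hFF0 y).1
    have hub : ∀ ε : ℝ, 0 < ε → FF y ≤ 0 + ε := by
      intro ε hε
      obtain ⟨w, hwA, hwd⟩ := Metric.mem_closure_iff.mp hy ε hε
      have hwA' : FF w = 0 := hwA
      have hple : ∀ j, f j y ≤ f j w + ε := fun j =>
        (hfLip j y w).trans (by linarith [hwd.le])
      have hRt : Tendsto (fun j => f j w + ε) 𝒰 (𝓝 (0 + ε)) := by
        rw [← hwA']
        exact (hFFt w).add_const ε
      linarith [le_of_tendsto_of_tendsto' (hFFt y) hRt hple]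
    have := real_le_of_forall_pos hub
    linarith
  have hBclosed : IsClosed B := by
    rw [← closure_subset_iff_isClosed]
    intro y hy
    show GG y = 0
    have h0 : 0 ≤ GG y := (hGG0 y).1
    have hub : ∀ ε : ℝ, 0 < ε → GG y ≤ 0 + ε := by
      intro ε hε
      obtain ⟨w, hwB, hwd⟩ := Metric.mem_closure_iff.mp hy ε hε
      have hwB' : GG w = 0 := hwB
      have hple : ∀ j, g j y ≤ g j w + ε := fun j =>
        (hgLip j y w).trans (by linarith [hwd.le])
      have hRt : Tendsto (fun j => g j w + ε) 𝒰 (𝓝 (0 + ε)) := by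
        rw [← hwB']
        exact (hGGt w).add_const ε
      linarith [le_of_tendsto_of_tendsto' (hGGt y) hRt hple]
    have := real_le_of_forall_pos hub
    linarith
  have hABq : ∀ y, y ∈ A → y ∈ B → y = qq := by
    intro y hyA hyB
    have h1 := hcrossq y y hyA hyB
    rw [dist_self] at h1
    have : dist y qq ≤ 0 := by linarith
    exact dist_le_zero.mp this
  have hAne : ∃ a ∈ A, a ≠ qq := by
    rcases eq_or_ne a1 qq with h | h
    · refine ⟨a2, hFa2, ?_⟩
      intro h2
      rw [h, h2, dist_self] at ha12
      linarith
    · exact ⟨a1, hFa1, h⟩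
  have hBne : ∃ b ∈ B, b ≠ qq := by
    rcases eq_or_ne b1 qq with h | h
    · refine ⟨b2, hGb2, ?_⟩
      intro h2
      rw [h, h2, dist_self] at hb12
      linarith
    · exact ⟨b1, hGb1, h⟩
  haveI : PreconnectedSpace Y := hYlen.preconnectedSpace
  obtain ⟨N, hNopen, hqN, hNpre⟩ := exists_punctured_nbhd Y qq
  have hcovset : N \ {qq} ⊆ A ∪ B := by
    intro y hy
    rcases hcovq y with h | h | h
    · exact Or.inl h
    · exact Or.inr h
    · exact absurd h hy.2
  have hsplit : (N \ {qq}) ∩ A = ∅ ∨ (N \ {qq}) ∩ B = ∅ := by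
    by_contra hns
    push_neg at hns
    obtain ⟨h1, h2⟩ := hns
    obtain ⟨w, hws, hwA, hwB⟩ := isPreconnected_closed_iff.mp hNpre A B hAclosed hBclosed
      hcovset h1 h2
    exact hws.2 (hABq w hwA hwB)
  rcases hsplit with hempty | hempty
  · refine no_separation hBclosed hAclosed ?_ ?_ hAne hNopen hqN hempty
    · intro y
      rcases hcovq y with h | h | h
      · exact Or.inr (Or.inl h)
      · exact Or.inl h
      · exact Or.inr (Or.inr h)
    · rintro y ⟨hyB, hyA⟩
      exact hABq y hyA hyB
  · refine no_separation hAclosed hBclosed ?_ ?_ hBne hNopen hqN hempty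
    · intro y
      rcases hcovq y with h | h | h
      · exact Or.inl h
      · exact Or.inr (Or.inl h)
      · exact Or.inr (Or.inr h)
    · rintro y ⟨hyA, hyB⟩
      exact hABq y hyA hyB

end Main


theorem limsup_modulus_separating_lt_top
    (X : ℕ → Type) [∀ n, MetricSpace (X n)] [∀ n, CompactSpace (X n)] [∀ n, Nonempty (X n)]
    [∀ n, MeasurableSpace (X n)] [∀ n, BorelSpace (X n)]
    (hXlen : ∀ n, IsLengthSpace (X n))
    (Y : Type) [MetricSpace Y] [CompactSpace Y] [Nonempty Y]
    [MeasurableSpace Y] [BorelSpace Y]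
    -- `Y` is (homeomorphic to) a 2-manifold, possibly with boundary:
    [ChartedSpace (EuclideanHalfSpace 2) Y] [T2Space Y]
    (hYlen : IsLengthSpace Y)
    -- Gromov–Hausdorff convergence of `Xₙ` to `Y`:
    (hGH : Tendsto (fun n => GromovHausdorff.ghDist (X n) Y) atTop (𝓝 0))
    -- uniformly bounded areas:
    (harea : limsup (fun n => hausdorff2 (X n) Set.univ) atTop < ⊤)
    (δ : ℝ) (hδ : 0 < δ)
    -- disjoint continua `Eₙ, Fₙ ⊆ Xₙ` of diameter at least `δ`:
    (E F : ∀ n, Set (X n))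
    (hEcont : ∀ n, IsCompact (E n) ∧ IsConnected (E n))
    (hFcont : ∀ n, IsCompact (F n) ∧ IsConnected (F n))
    (hdisj : ∀ n, Disjoint (E n) (F n))
    (hdiam : ∀ n, δ ≤ Metric.diam (E n) ∧ δ ≤ Metric.diam (F n)) :
    limsup (fun n => modulus (separatingCurves (E n) (F n))) atTop < ⊤ := by
  obtain ⟨m, hm, hev⟩ := eventual_length_bound X hXlen Y hYlen hGH δ hδ E F hEcont hFcont hdiam
  set A' : ℝ≥0∞ := limsup (fun n => hausdorff2 (X n) Set.univ) atTop + 1 with hA'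
  have hA'top : A' < ⊤ := by
    rw [hA']
    exact ENNReal.add_lt_top.mpr ⟨harea, ENNReal.one_lt_top⟩
  have hAev : ∀ᶠ n in atTop, hausdorff2 (X n) Set.univ ≤ A' := by
    have hlt : limsup (fun n => hausdorff2 (X n) Set.univ) atTop < A' := by
      rw [hA']
      exact ENNReal.lt_add_right harea.ne one_ne_zero
    exact (Filter.eventually_lt_of_limsup_lt hlt).mono fun n h => h.le
  have hbound : ∀ᶠ n in atTop,
      modulus (separatingCurves (E n) (F n)) ≤ (ENNReal.ofReal (1/m))^2 * A' := by
    filter_upwards [hev, hAev] with n h1 h2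
    calc modulus (separatingCurves (E n) (F n))
        ≤ (ENNReal.ofReal (1/m))^2 * hausdorff2 (X n) Set.univ :=
          modulus_le_of_length_lower_bound hm h1
      _ ≤ (ENNReal.ofReal (1/m))^2 * A' := mul_le_mul_right h2 _
  calc limsup (fun n => modulus (separatingCurves (E n) (F n))) atTop
      ≤ (ENNReal.ofReal (1/m))^2 * A' := Filter.limsup_le_of_le (by isBoundedDefault) hbound
    _ < ⊤ := ENNReal.mul_lt_top
        (ENNReal.pow_ne_top ENNReal.ofReal_ne_top).lt_top hA'top
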